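/- (Unobservability of absolute position.) Fix g ∈ ℝ³. Let A be the 12×12 real matrix, written in 3×3 blocks indexed 1..4, whose only nonzero blocks are A₂₁ = ĝ and A₃₂ = I₃, and let H be the 3×12 matrix with blocks (0₃, 0₃, −I₃, I₃). Then for every t ∈ ℝ and every w ∈ ℝ³, H * exp_m(A t) * u = 0, where u ∈ ℝ¹² is the vector with block components (0, 0, w, w). Hence the direction of a common translation of the position and contact-point states lies in the kernel of every row block of the observability matrix. -/

import Mathlib

open Matrix

/-- The skew-symmetric (hat) matrix of a vector `φ ∈ ℝ³`, so that `skew φ *ᵥ x = φ × x`. -/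
noncomputable def skew (φ : Fin 3 → ℝ) : Matrix (Fin 3) (Fin 3) ℝ :=
  !![0, -φ 2, φ 1; φ 2, 0, -φ 0; -φ 1, φ 0, 0]

/-- Assemble a 12×12 matrix from a 4×4 array of 3×3 blocks. -/
noncomputable def B4 (M : Fin 4 → Fin 4 → Matrix (Fin 3) (Fin 3) ℝ) :
    Matrix (Fin 12) (Fin 12) ℝ := fun i j =>
  M ⟨(i : ℕ) / 3, by have := i.isLt; omega⟩ ⟨(j : ℕ) / 3, by have := j.isLt; omega⟩
    ⟨(i : ℕ) % 3, by omega⟩ ⟨(j : ℕ) % 3, by omega⟩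

/-- The linearized right-invariant error dynamics matrix: the 12×12 block matrix whose only
nonzero blocks are `A₂₁ = ĝ` and `A₃₂ = I₃`. -/
noncomputable def A12 (g : Fin 3 → ℝ) : Matrix (Fin 12) (Fin 12) ℝ :=
  B4 ![![0, 0, 0, 0], ![skew g, 0, 0, 0], ![0, 1, 0, 0], ![0, 0, 0, 0]]

/-- The forward-kinematics observation matrix: the 3×12 matrix with 3×3 blocks
`(0, 0, -I₃, I₃)`. -/
noncomputable def H312 : Matrix (Fin 3) (Fin 12) ℝ := fun i j =>
  (![0, 0, -1, 1] : Fin 4 → Matrix (Fin 3) (Fin 3) ℝ)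
    ⟨(j : ℕ) / 3, by have := j.isLt; omega⟩ i ⟨(j : ℕ) % 3, by omega⟩

/-- Assemble a vector in `ℝ¹²` from four block components in `ℝ³`. -/
noncomputable def vec4 (x : Fin 4 → Fin 3 → ℝ) : Fin 12 → ℝ := fun j =>
  x ⟨(j : ℕ) / 3, by have := j.isLt; omega⟩ ⟨(j : ℕ) % 3, by omega⟩

lemma pow_mulVec_ker (M : Matrix (Fin 12) (Fin 12) ℝ) (u : Fin 12 → ℝ)
    (h : M *ᵥ u = 0) : ∀ n, 1 ≤ n → (M ^ n) *ᵥ u = 0 := by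
  intro n hn
  induction n with
  | zero => omega
  | succ k ih =>
    rcases Nat.eq_or_lt_of_le hn with h1 | h1
    · simpa [← h1] using h
    · rw [pow_succ, ← Matrix.mulVec_mulVec, h, Matrix.mulVec_zero]

lemma exp_mulVec_ker (M : Matrix (Fin 12) (Fin 12) ℝ) (u : Fin 12 → ℝ)
    (h : M *ᵥ u = 0) : NormedSpace.exp M *ᵥ u = u := by
  classical
  letI : SeminormedRing (Matrix (Fin 12) (Fin 12) ℝ) := Matrix.linftyOpSemiNormedRing
  letI : NormedRing (Matrix (Fin 12) (Fin 12) ℝ) := Matrix.linftyOpNormedRing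
  letI : NormedAlgebra ℝ (Matrix (Fin 12) (Fin 12) ℝ) := Matrix.linftyOpNormedAlgebra
  let L : Matrix (Fin 12) (Fin 12) ℝ →L[ℝ] (Fin 12 → ℝ) :=
    LinearMap.toContinuousLinearMap
      { toFun := fun N => N *ᵥ u
        map_add' := fun a b => Matrix.add_mulVec a b u
        map_smul' := fun c a => by simp [Matrix.smul_mulVec] }
  have hL : ∀ N, L N = N *ᵥ u := fun _ => rfl
  have hs := NormedSpace.expSeries_summable' (𝕂 := ℝ) M
  rw [NormedSpace.exp_eq_tsum (𝕂 := ℝ)]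
  rw [show (∑' n : ℕ, (n.factorial : ℝ)⁻¹ • M ^ n) *ᵥ u
      = L (∑' n : ℕ, (n.factorial : ℝ)⁻¹ • M ^ n) from rfl, L.map_tsum hs]
  have key : ∀ n : ℕ, L ((n.factorial : ℝ)⁻¹ • M ^ n) = if n = 0 then u else 0 := by
    intro n
    cases n with
    | zero => simp [hL]
    | succ k => simp [hL, Matrix.smul_mulVec, pow_mulVec_ker M u h (k+1) (by omega)]
  simp_rw [key]
  rw [tsum_eq_single 0 (by intro b hb; simp [hb])]
  simp

lemma ker_A (g : Fin 3 → ℝ) (w : Fin 3 → ℝ) : A12 g *ᵥ vec4 ![0, 0, w, w] = 0 := by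
  funext i
  simp only [mulVec, dotProduct, Pi.zero_apply]
  apply Finset.sum_eq_zero
  intro j _
  fin_cases i <;> fin_cases j <;> first | exact zero_mul _ | exact mul_zero _

lemma H_u (w : Fin 3 → ℝ) : H312 *ᵥ vec4 ![0, 0, w, w] = 0 := by
  funext i
  simp only [mulVec, dotProduct, Pi.zero_apply]
  have hs : ∀ F : Fin 4 → Fin 3 → ℝ,
      (∑ j : Fin 12, F ⟨(j : ℕ) / 3, by have := j.isLt; omega⟩ ⟨(j : ℕ) % 3, by omega⟩)
        = F 0 0 + (F 0 1 + (F 0 2 + (F 1 0 + (F 1 1 + (F 1 2 + (F 2 0 + (F 2 1 + (F 2 2 +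
          (F 3 0 + (F 3 1 + F 3 2)))))))))) := by
    intro F
    simp only [Fin.sum_univ_succ, Fin.sum_univ_zero, add_zero]
    rfl
  refine (hs (fun b k => (![0, 0, -1, 1] : Fin 4 → Matrix (Fin 3) (Fin 3) ℝ) b i k *
    (![0, 0, w, w] : Fin 4 → Fin 3 → ℝ) b k)).trans ?_
  simp
  ring

/-- **Unobservability of absolute position.** A common translation `w` of the position and
contact-point states lies in the kernel of every row block `H exp_m(A t)` of the
observability matrix. -/
theorem absolute_position_unobservable (g : Fin 3 → ℝ) (t : ℝ) (w : Fin 3 → ℝ) :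
    H312 *ᵥ (NormedSpace.exp (t • A12 g) *ᵥ vec4 ![0, 0, w, w]) = 0 := by
  have h : (t • A12 g) *ᵥ vec4 ![0, 0, w, w] = 0 := by
    rw [Matrix.smul_mulVec, ker_A, smul_zero]
  rw [exp_mulVec_ker _ _ h, H_u]
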